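/- For every Θ = (θ₁,…,θ₅) with all θ_i > 0 and θ₁+⋯+θ₅ < π, the Hildebrand matrix T(Θ) is copositive: vᵀT(Θ)v ≥ 0 for every v ∈ ℝ⁵ with all entries nonnegative. -/
import Mathlib


open Matrix Real

/-- The Hildebrand matrix `T(Θ)` with parameters `θ₁ = θ 0, …, θ₅ = θ 4`. -/
noncomputable def Hildebrand (θ : Fin 5 → ℝ) : Matrix (Fin 5) (Fin 5) ℝ :=
  !![1, -cos (θ 0), cos (θ 0 + θ 1), cos (θ 3 + θ 4), -cos (θ 4);
     -cos (θ 0), 1, -cos (θ 1), cos (θ 1 + θ 2), cos (θ 4 + θ 0);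
     cos (θ 0 + θ 1), -cos (θ 1), 1, -cos (θ 2), cos (θ 2 + θ 3);
     cos (θ 3 + θ 4), cos (θ 1 + θ 2), -cos (θ 2), 1, -cos (θ 3);
     -cos (θ 4), cos (θ 4 + θ 0), cos (θ 2 + θ 3), -cos (θ 3), 1]

private lemma cos_add_cos_nonneg' {x y : ℝ} (hx : 0 < x) (hy : 0 < y) (hxy : x + y < π) :
    0 ≤ cos x + cos y := by
  have h1 : Real.cos (π - x) ≤ Real.cos y :=
    Real.cos_le_cos_of_nonneg_of_le_pi (le_of_lt hy) (by linarith) (by linarith)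
  rw [Real.cos_pi_sub] at h1
  linarith

private lemma cos4 (u w d : ℝ) :
    (cos (u + (w + d)) + cos (u - (w + d))) - (cos (u + (w - d)) + cos (u - (w - d)))
      = -(4 * cos u * sin w * sin d) := by
  simp only [Real.cos_add, Real.cos_sub, Real.sin_add, Real.sin_sub]
  ring

set_option maxHeartbeats 1000000 in
/-- The master inequality: the Hildebrand quadratic form, written out as a scalar
expression, is nonnegative under one of two domination hypotheses. -/
private lemma master (t1 t2 t3 t4 t5 v1 v2 v3 v4 v5 : ℝ)
    (ht1 : 0 < t1) (ht2 : 0 < t2) (ht3 : 0 < t3) (ht4 : 0 < t4) (ht5 : 0 < t5)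
    (hs : t1 + t2 + t3 + t4 + t5 < π)
    (hv1 : 0 ≤ v1) (hv2 : 0 ≤ v2) (hv3 : 0 ≤ v3) (hv4 : 0 ≤ v4) (hv5 : 0 ≤ v5)
    (H : (t5 ≤ t1 + t2 + t3 ∧ v5 ≤ v4) ∨ (t5 ≤ t2 + t3 + t4 ∧ v1 ≤ v2)) :
    0 ≤ v1^2 + v2^2 + v3^2 + v4^2 + v5^2
      - 2*cos t1*(v1*v2) - 2*cos t2*(v2*v3) - 2*cos t3*(v3*v4) - 2*cos t4*(v4*v5)
      - 2*cos t5*(v1*v5)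
      + 2*cos (t1+t2)*(v1*v3) + 2*cos (t2+t3)*(v2*v4) + 2*cos (t3+t4)*(v3*v5)
      + 2*cos (t4+t5)*(v1*v4) + 2*cos (t5+t1)*(v2*v5) := by
  have hpi := Real.pi_pos
  -- trig addition facts
  have h2 : cos t2 = cos (t1+t2) * cos t1 + sin (t1+t2) * sin t1 := by
    rw [← Real.cos_sub]; congr 1; ring
  have h3 : cos t3 = cos (t1+t2+t3) * cos (t1+t2) + sin (t1+t2+t3) * sin (t1+t2) := by
    rw [← Real.cos_sub]; congr 1; ring
  have h4 : cos t4 = cos (t1+t2+t3+t4) * cos (t1+t2+t3) + sin (t1+t2+t3+t4) * sin (t1+t2+t3) := by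
    rw [← Real.cos_sub]; congr 1; ring
  have h23 : cos (t2+t3) = cos (t1+t2+t3) * cos t1 + sin (t1+t2+t3) * sin t1 := by
    rw [← Real.cos_sub]; congr 1; ring
  have h34 : cos (t3+t4) = cos (t1+t2+t3+t4) * cos (t1+t2) + sin (t1+t2+t3+t4) * sin (t1+t2) := by
    rw [← Real.cos_sub]; congr 1; ring
  have h234 : cos (t2+t3+t4) = cos (t1+t2+t3+t4) * cos t1 + sin (t1+t2+t3+t4) * sin t1 := by
    rw [← Real.cos_sub]; congr 1; ring
  have py1 : sin t1 ^ 2 + cos t1 ^ 2 = 1 := Real.sin_sq_add_cos_sq t1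
  have py2 : sin (t1+t2) ^ 2 + cos (t1+t2) ^ 2 = 1 := Real.sin_sq_add_cos_sq _
  have py3 : sin (t1+t2+t3) ^ 2 + cos (t1+t2+t3) ^ 2 = 1 := Real.sin_sq_add_cos_sq _
  have py4 : sin (t1+t2+t3+t4) ^ 2 + cos (t1+t2+t3+t4) ^ 2 = 1 := Real.sin_sq_add_cos_sq _
  -- the key identity
  have key : v1^2 + v2^2 + v3^2 + v4^2 + v5^2
      - 2*cos t1*(v1*v2) - 2*cos t2*(v2*v3) - 2*cos t3*(v3*v4) - 2*cos t4*(v4*v5)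
      - 2*cos t5*(v1*v5)
      + 2*cos (t1+t2)*(v1*v3) + 2*cos (t2+t3)*(v2*v4) + 2*cos (t3+t4)*(v3*v5)
      + 2*cos (t4+t5)*(v1*v4) + 2*cos (t5+t1)*(v2*v5)
      = (v1 - cos t1 * v2 + cos (t1+t2) * v3 - cos (t1+t2+t3) * v4 + cos (t1+t2+t3+t4) * v5)^2
        + (sin t1 * v2 - sin (t1+t2) * v3 + sin (t1+t2+t3) * v4 - sin (t1+t2+t3+t4) * v5)^2
        + 2*(cos (t4+t5) + cos (t1+t2+t3))*(v1*v4)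
        + 2*(cos (t5+t1) + cos (t2+t3+t4))*(v2*v5)
        - 2*(cos t5 + cos (t1+t2+t3+t4))*(v1*v5) := by
    linear_combination (-2*(v2*v3))*h2 + (-2*(v3*v4))*h3 + (-2*(v4*v5))*h4
      + (2*(v2*v4))*h23 + (2*(v3*v5))*h34 + (-2*(v2*v5))*h234
      + (-(v2^2))*py1 + (-(v3^2))*py2 + (-(v4^2))*py3 + (-(v5^2))*py4
  have hc : 0 ≤ cos t5 + cos (t1+t2+t3+t4) :=
    cos_add_cos_nonneg' ht5 (by linarith) (by linarith)
  have ha : 0 ≤ cos (t4+t5) + cos (t1+t2+t3) :=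
    cos_add_cos_nonneg' (by linarith) (by linarith) (by linarith)
  have hb : 0 ≤ cos (t5+t1) + cos (t2+t3+t4) :=
    cos_add_cos_nonneg' (by linarith) (by linarith) (by linarith)
  have hcu : 0 < cos ((t1+t2+t3+t4+t5)/2) :=
    Real.cos_pos_of_mem_Ioo ⟨by linarith, by linarith⟩
  rcases H with ⟨hA, hvA⟩ | ⟨hB, hvB⟩
  · -- case A : a ≥ c and v5 ≤ v4
    have h := cos4 ((t1+t2+t3+t4+t5)/2) ((t5-(t1+t2+t3))/2) (t4/2)
    rw [show (t1+t2+t3+t4+t5)/2 + ((t5-(t1+t2+t3))/2 + t4/2) = t4+t5 by ring,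
        show (t1+t2+t3+t4+t5)/2 - ((t5-(t1+t2+t3))/2 + t4/2) = t1+t2+t3 by ring,
        show (t1+t2+t3+t4+t5)/2 + ((t5-(t1+t2+t3))/2 - t4/2) = t5 by ring,
        show (t1+t2+t3+t4+t5)/2 - ((t5-(t1+t2+t3))/2 - t4/2) = t1+t2+t3+t4 by ring] at h
    have hsw : sin ((t5-(t1+t2+t3))/2) ≤ 0 :=
      Real.sin_nonpos_of_nonpos_of_neg_pi_le (by linarith) (by linarith)
    have hsd : 0 ≤ sin (t4/2) :=
      Real.sin_nonneg_of_nonneg_of_le_pi (by linarith) (by linarith)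
    have hprod : 0 ≤ cos ((t1+t2+t3+t4+t5)/2) * (-sin ((t5-(t1+t2+t3))/2)) * sin (t4/2) :=
      mul_nonneg (mul_nonneg hcu.le (by linarith)) hsd
    have hac : cos t5 + cos (t1+t2+t3+t4) ≤ cos (t4+t5) + cos (t1+t2+t3) := by linarith [h, hprod]
    have s1 : 0 ≤ (cos t5 + cos (t1+t2+t3+t4)) * v1 := mul_nonneg hc hv1
    have s2 : (cos t5 + cos (t1+t2+t3+t4)) * v1 * v5 ≤ (cos t5 + cos (t1+t2+t3+t4)) * v1 * v4 :=
      mul_le_mul_of_nonneg_left hvA s1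
    have s3 : (cos t5 + cos (t1+t2+t3+t4)) * (v1 * v4)
        ≤ (cos (t4+t5) + cos (t1+t2+t3)) * (v1 * v4) :=
      mul_le_mul_of_nonneg_right hac (mul_nonneg hv1 hv4)
    have k2 : 0 ≤ (cos (t5+t1) + cos (t2+t3+t4)) * (v2*v5) := mul_nonneg hb (mul_nonneg hv2 hv5)
    linarith [key, s2, s3, k2,
      sq_nonneg (v1 - cos t1 * v2 + cos (t1+t2) * v3 - cos (t1+t2+t3) * v4 + cos (t1+t2+t3+t4) * v5),
      sq_nonneg (sin t1 * v2 - sin (t1+t2) * v3 + sin (t1+t2+t3) * v4 - sin (t1+t2+t3+t4) * v5)]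
  · -- case B : b ≥ c and v1 ≤ v2
    have h := cos4 ((t1+t2+t3+t4+t5)/2) ((t5-(t2+t3+t4))/2) (t1/2)
    rw [show (t1+t2+t3+t4+t5)/2 + ((t5-(t2+t3+t4))/2 + t1/2) = t5+t1 by ring,
        show (t1+t2+t3+t4+t5)/2 - ((t5-(t2+t3+t4))/2 + t1/2) = t2+t3+t4 by ring,
        show (t1+t2+t3+t4+t5)/2 + ((t5-(t2+t3+t4))/2 - t1/2) = t5 by ring,
        show (t1+t2+t3+t4+t5)/2 - ((t5-(t2+t3+t4))/2 - t1/2) = t1+t2+t3+t4 by ring] at h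
    have hsw : sin ((t5-(t2+t3+t4))/2) ≤ 0 :=
      Real.sin_nonpos_of_nonpos_of_neg_pi_le (by linarith) (by linarith)
    have hsd : 0 ≤ sin (t1/2) :=
      Real.sin_nonneg_of_nonneg_of_le_pi (by linarith) (by linarith)
    have hprod : 0 ≤ cos ((t1+t2+t3+t4+t5)/2) * (-sin ((t5-(t2+t3+t4))/2)) * sin (t1/2) :=
      mul_nonneg (mul_nonneg hcu.le (by linarith)) hsd
    have hbc : cos t5 + cos (t1+t2+t3+t4) ≤ cos (t5+t1) + cos (t2+t3+t4) := by linarith [h, hprod]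
    have s1 : 0 ≤ (cos t5 + cos (t1+t2+t3+t4)) * v5 := mul_nonneg hc hv5
    have s2 : (cos t5 + cos (t1+t2+t3+t4)) * v5 * v1 ≤ (cos t5 + cos (t1+t2+t3+t4)) * v5 * v2 :=
      mul_le_mul_of_nonneg_left hvB s1
    have s3 : (cos t5 + cos (t1+t2+t3+t4)) * (v2 * v5)
        ≤ (cos (t5+t1) + cos (t2+t3+t4)) * (v2 * v5) :=
      mul_le_mul_of_nonneg_right hbc (mul_nonneg hv2 hv5)
    have k2 : 0 ≤ (cos (t4+t5) + cos (t1+t2+t3)) * (v1*v4) := mul_nonneg ha (mul_nonneg hv1 hv4)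
    linarith [key, s2, s3, k2,
      sq_nonneg (v1 - cos t1 * v2 + cos (t1+t2) * v3 - cos (t1+t2+t3) * v4 + cos (t1+t2+t3+t4) * v5),
      sq_nonneg (sin t1 * v2 - sin (t1+t2) * v3 + sin (t1+t2+t3) * v4 - sin (t1+t2+t3+t4) * v5)]

set_option maxHeartbeats 2000000 in
/-- every Hildebrand matrix `T(Θ)` is copositive. -/
theorem hildebrand_copositive (θ : Fin 5 → ℝ) (hθ : ∀ i, 0 < θ i) (hsum : (∑ i, θ i) < π)
    (v : Fin 5 → ℝ) (hv : ∀ i, 0 ≤ v i) :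
    0 ≤ v ⬝ᵥ (Hildebrand θ).mulVec v := by
  rw [Fin.sum_univ_five] at hsum
  have h0 := hθ 0; have h1 := hθ 1; have h2 := hθ 2; have h3 := hθ 3; have h4 := hθ 4
  have w0 := hv 0; have w1 := hv 1; have w2 := hv 2; have w3 := hv 3; have w4 := hv 4
  simp only [Hildebrand, dotProduct, Matrix.mulVec, Fin.sum_univ_five,
    Matrix.of_apply, Matrix.cons_val', Matrix.cons_val_zero, Matrix.cons_val_one,
    Matrix.head_cons, Matrix.empty_val', Matrix.cons_val_fin_one, Matrix.head_fin_const,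
    Matrix.cons_val_two, Matrix.tail_cons, Matrix.cons_val_three, Matrix.cons_val_four]
  have hmax : ∃ m : Fin 5, ∀ i, θ i ≤ θ m := by
    obtain ⟨m, -, hm⟩ := Finset.exists_max_image Finset.univ θ ⟨0, Finset.mem_univ 0⟩
    exact ⟨m, fun i => hm i (Finset.mem_univ i)⟩
  obtain ⟨m, hm⟩ := hmax
  fin_cases m
  · replace hm : ∀ i, θ i ≤ θ 0 := hm
    rcases le_total (v 3) (v 2) with h | h
    · refine le_trans (master (θ 4) (θ 0) (θ 1) (θ 2) (θ 3) (v 4) (v 0) (v 1) (v 2) (v 3)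
        h4 h0 h1 h2 h3 (by linarith) w4 w0 w1 w2 w3
        (Or.inl ⟨by have := hm 3; linarith, h⟩)) (le_of_eq (by ring))
    · refine le_trans (master (θ 2) (θ 3) (θ 4) (θ 0) (θ 1) (v 2) (v 3) (v 4) (v 0) (v 1)
        h2 h3 h4 h0 h1 (by linarith) w2 w3 w4 w0 w1
        (Or.inr ⟨by have := hm 1; linarith, h⟩)) (le_of_eq (by ring))
  · replace hm : ∀ i, θ i ≤ θ 1 := hm
    rcases le_total (v 4) (v 3) with h | h
    · refine le_trans (master (θ 0) (θ 1) (θ 2) (θ 3) (θ 4) (v 0) (v 1) (v 2) (v 3) (v 4)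
        h0 h1 h2 h3 h4 (by linarith) w0 w1 w2 w3 w4
        (Or.inl ⟨by have := hm 4; linarith, h⟩)) (le_of_eq (by ring))
    · refine le_trans (master (θ 3) (θ 4) (θ 0) (θ 1) (θ 2) (v 3) (v 4) (v 0) (v 1) (v 2)
        h3 h4 h0 h1 h2 (by linarith) w3 w4 w0 w1 w2
        (Or.inr ⟨by have := hm 2; linarith, h⟩)) (le_of_eq (by ring))
  · replace hm : ∀ i, θ i ≤ θ 2 := hm
    rcases le_total (v 0) (v 4) with h | h
    · refine le_trans (master (θ 1) (θ 2) (θ 3) (θ 4) (θ 0) (v 1) (v 2) (v 3) (v 4) (v 0)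
        h1 h2 h3 h4 h0 (by linarith) w1 w2 w3 w4 w0
        (Or.inl ⟨by have := hm 0; linarith, h⟩)) (le_of_eq (by ring))
    · refine le_trans (master (θ 4) (θ 0) (θ 1) (θ 2) (θ 3) (v 4) (v 0) (v 1) (v 2) (v 3)
        h4 h0 h1 h2 h3 (by linarith) w4 w0 w1 w2 w3
        (Or.inr ⟨by have := hm 3; linarith, h⟩)) (le_of_eq (by ring))
  · replace hm : ∀ i, θ i ≤ θ 3 := hm
    rcases le_total (v 1) (v 0) with h | h
    · refine le_trans (master (θ 2) (θ 3) (θ 4) (θ 0) (θ 1) (v 2) (v 3) (v 4) (v 0) (v 1)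
        h2 h3 h4 h0 h1 (by linarith) w2 w3 w4 w0 w1
        (Or.inl ⟨by have := hm 1; linarith, h⟩)) (le_of_eq (by ring))
    · refine le_trans (master (θ 0) (θ 1) (θ 2) (θ 3) (θ 4) (v 0) (v 1) (v 2) (v 3) (v 4)
        h0 h1 h2 h3 h4 (by linarith) w0 w1 w2 w3 w4
        (Or.inr ⟨by have := hm 4; linarith, h⟩)) (le_of_eq (by ring))
  · replace hm : ∀ i, θ i ≤ θ 4 := hm
    rcases le_total (v 2) (v 1) with h | h
    · refine le_trans (master (θ 3) (θ 4) (θ 0) (θ 1) (θ 2) (v 3) (v 4) (v 0) (v 1) (v 2)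
        h3 h4 h0 h1 h2 (by linarith) w3 w4 w0 w1 w2
        (Or.inl ⟨by have := hm 2; linarith, h⟩)) (le_of_eq (by ring))
    · refine le_trans (master (θ 1) (θ 2) (θ 3) (θ 4) (θ 0) (v 1) (v 2) (v 3) (v 4) (v 0)
        h1 h2 h3 h4 h0 (by linarith) w1 w2 w3 w4 w0
        (Or.inr ⟨by have := hm 0; linarith, h⟩)) (le_of_eq (by ring))
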